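/- arXiv:2602.07285 — 3 statements merged into one kernel-verified Lean document; each statement's English description precedes it below -/
import Mathlib

section
/- For every k ∈ {1, …, m−1}, the minimal false omission rate at selection rate μ_k equals the conditional mean of the bottom scores: q_k := q*(μ_k) = (π − μ_k p_k)/(1 − μ_k) = (Σ_{i>k} s_i P(S=s_i)) / (Σ_{i>k} P(S=s_i)); in particular q_{m−1} = s_m. -/
open Finset

/-!
Single-group setting.  A finite probability space `(Ω, P)`, a binary target `Y` with
base rate `π := P(Y = 1)`, and a calibrated score `S` taking `m > 1` distinct values
`1 ≥ s_1 > ⋯ > s_m ≥ 0` (here 0-indexed: `s i` is the paper's `s_{i+1}`), each with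
positive probability `w i = P(S = s i)`, are—via calibration
`P(Y = 1 ∣ S = s i) = s i`—completely described, for the purposes of classifiers
based on `S`, by the data below.  A (possibly randomized) binary classifier `R`
based on `S` (i.e. `P(R = 1 ∣ S, Y) = P(R = 1 ∣ S)`) is in turn determined by its
selection rule `t i = P(R = 1 ∣ S = s i)`, with `P(R = 1) = ∑ i, w i * t i`,
`P(Y = 1, R = 1) = ∑ i, s i * w i * t i`, `PPV(R) = P(Y = 1 ∣ R = 1)` and
`FOR(R) = P(Y = 1 ∣ R = 0)` as given below.
-/
structure CalibScore where
  m : ℕ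
  s : ℕ → ℝ
  w : ℕ → ℝ
  one_lt_m : 1 < m
  s_nonneg : ∀ i, i < m → 0 ≤ s i
  s_le_one : ∀ i, i < m → s i ≤ 1
  s_desc : ∀ i j, i < j → j < m → s j < s i
  w_pos : ∀ i, i < m → 0 < w i
  w_sum : ∑ i ∈ Finset.range m, w i = 1

namespace CalibScore

/-- Base rate `π = P(Y = 1) = E[S]` (by calibration). -/
noncomputable def pi (D : CalibScore) : ℝ := ∑ i ∈ Finset.range D.m, D.s i * D.w i

/-- `t` is a selection rule (`t i = P(R = 1 ∣ S = s i)` for a classifier `R` based on `S`). -/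
def IsSelRule (D : CalibScore) (t : ℕ → ℝ) : Prop := ∀ i, i < D.m → 0 ≤ t i ∧ t i ≤ 1

/-- Selection rate `μ = P(R = 1)`. -/
noncomputable def selRate (D : CalibScore) (t : ℕ → ℝ) : ℝ :=
  ∑ i ∈ Finset.range D.m, D.w i * t i

/-- `P(Y = 1, R = 1) = ∑ i, s i * P(S = s i) * P(R = 1 ∣ S = s i)` (by calibration). -/
noncomputable def posSel (D : CalibScore) (t : ℕ → ℝ) : ℝ :=
  ∑ i ∈ Finset.range D.m, D.s i * D.w i * t i

/-- `PPV(R) = P(Y = 1 ∣ R = 1)`. -/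
noncomputable def ppv (D : CalibScore) (t : ℕ → ℝ) : ℝ := D.posSel t / D.selRate t

/-- `FOR(R) = P(Y = 1 ∣ R = 0)`. -/
noncomputable def forr (D : CalibScore) (t : ℕ → ℝ) : ℝ :=
  (D.pi - D.posSel t) / (1 - D.selRate t)

/-- `(p, q)` is feasible with selection rate `μ`: attained by a nonconstant
classifier based on `S` with `P(R = 1) = μ`. -/
def FeasibleWith (D : CalibScore) (μ p q : ℝ) : Prop :=
  0 < μ ∧ μ < 1 ∧ ∃ t, D.IsSelRule t ∧ D.selRate t = μ ∧ D.ppv t = p ∧ D.forr t = q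

/-- The feasible region `C`. -/
def Feasible (D : CalibScore) (p q : ℝ) : Prop := ∃ μ, D.FeasibleWith μ p q

/-- `μ_k = ∑_{i ≤ k} P(S = s_i)` (1-based `k`; `μ_0 = 0`). -/
noncomputable def muk (D : CalibScore) (k : ℕ) : ℝ := ∑ i ∈ Finset.range k, D.w i

/-- `c_k = ∑_{i < k} P(S = s_i) (s_i − s_k)` (1-based `k`). -/
noncomputable def ck (D : CalibScore) (k : ℕ) : ℝ :=
  ∑ i ∈ Finset.range (k - 1), D.w i * (D.s i - D.s (k - 1))

/-- `I_k = (μ_{k−1}, μ_k] ∩ (0, 1)` (1-based `k`). -/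
def Ik (D : CalibScore) (k : ℕ) : Set ℝ :=
  Set.Ioc (D.muk (k - 1)) (D.muk k) ∩ Set.Ioo 0 1

/-- `p*(μ)`: the supremum of `p` over pairs `(p, q)` feasible with `μ` having `q ≤ π ≤ p`. -/
noncomputable def pStar (D : CalibScore) (μ : ℝ) : ℝ :=
  sSup {p | ∃ q, D.FeasibleWith μ p q ∧ q ≤ D.pi ∧ D.pi ≤ p}

/-- `q*(μ)`: the infimum of `q` over pairs `(p, q)` feasible with `μ` having `q ≤ π ≤ p`. -/
noncomputable def qStar (D : CalibScore) (μ : ℝ) : ℝ :=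
  sInf {q | ∃ p, D.FeasibleWith μ p q ∧ q ≤ D.pi ∧ D.pi ≤ p}

/-- `p_k = s_k + c_k / μ_k` (1-based `k`), the breakpoint values of the boundary. -/
noncomputable def pkF (D : CalibScore) (k : ℕ) : ℝ := D.s (k - 1) + D.ck k / D.muk k

/-- The boundary formula `q(p) = ((π − c_k) p − s_k π) / (p − s_k − c_k)` on `J_k`
(1-based `k`). -/
noncomputable def qF (D : CalibScore) (k : ℕ) (p : ℝ) : ℝ :=
  ((D.pi - D.ck k) * p - D.s (k - 1) * D.pi) / (p - D.s (k - 1) - D.ck k)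

end CalibScore

/-- For every `k ∈ {1, …, m − 1}`, the minimal false omission rate
at selection rate `μ_k` equals the conditional mean of the bottom scores:
`q_k = q*(μ_k) = (π − μ_k p_k)/(1 − μ_k) = (∑_{i > k} s_i P(S = s_i)) / (∑_{i > k} P(S = s_i))`;
in particular `q_{m−1} = s_m`.  (1-based indices: the paper's `Σ_{i>k}` is a sum over
the 0-based index range `[k, m)`.) -/
theorem stmt10 (D : CalibScore) (k : ℕ) (hk1 : 1 ≤ k) (hkm : k < D.m) :
    D.qStar (D.muk k) = (D.pi - D.muk k * D.pStar (D.muk k)) / (1 - D.muk k) ∧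
    D.qStar (D.muk k) =
      (∑ i ∈ Finset.Ico k D.m, D.s i * D.w i) / (∑ i ∈ Finset.Ico k D.m, D.w i) ∧
    (k = D.m - 1 → D.qStar (D.muk k) = D.s (D.m - 1)) := by
  classical
  have hkm' : k ≤ D.m := hkm.le
  have hk1m : k - 1 < D.m := lt_of_le_of_lt (Nat.sub_le k 1) hkm
  set c : ℝ := D.s (k - 1) with hc
  have hμ : D.muk k = ∑ i ∈ Finset.range k, D.w i := rfl
  have hμpos : 0 < D.muk k := by
    rw [hμ]
    apply Finset.sum_pos
    · intro i hi; exact D.w_pos i (lt_of_lt_of_le (Finset.mem_range.mp hi) hkm')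
    · exact ⟨0, Finset.mem_range.mpr hk1⟩
  set W : ℝ := ∑ i ∈ Finset.Ico k D.m, D.w i with hWdef
  set B : ℝ := ∑ i ∈ Finset.Ico k D.m, D.s i * D.w i with hBdef
  set A : ℝ := ∑ i ∈ Finset.range k, D.s i * D.w i with hAdef
  have hWpos : 0 < W :=
    Finset.sum_pos (fun i hi => D.w_pos i (Finset.mem_Ico.mp hi).2)
      ⟨k, Finset.mem_Ico.mpr ⟨le_refl k, hkm⟩⟩
  have hμW : D.muk k + W = 1 := by
    rw [hμ, hWdef, Finset.sum_range_add_sum_Ico _ hkm', D.w_sum]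
  have hπ : D.pi = A + B := by
    rw [CalibScore.pi, hAdef, hBdef]
    exact (Finset.sum_range_add_sum_Ico _ hkm').symm
  have hcs : ∀ i, i < k → c ≤ D.s i := by
    intro i hi
    rcases eq_or_lt_of_le (Nat.le_sub_one_of_lt hi) with h | h
    · rw [hc, h]
    · exact (D.s_desc i (k - 1) h hk1m).le
  have hcs' : ∀ i, k ≤ i → i < D.m → D.s i ≤ c := by
    intro i hki him
    exact (D.s_desc (k - 1) i (lt_of_lt_of_le (Nat.sub_lt hk1 one_pos) hki) him).le
  have hAc : c * D.muk k ≤ A := by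
    rw [hμ, Finset.mul_sum, hAdef]
    apply Finset.sum_le_sum
    intro i hi
    have hik := Finset.mem_range.mp hi
    exact mul_le_mul_of_nonneg_right (hcs i hik) (D.w_pos i (lt_of_lt_of_le hik hkm')).le
  have hBc : B ≤ c * W := by
    rw [hWdef, Finset.mul_sum, hBdef]
    apply Finset.sum_le_sum
    intro i hi
    obtain ⟨hki, him⟩ := Finset.mem_Ico.mp hi
    exact mul_le_mul_of_nonneg_right (hcs' i hki him) (D.w_pos i him).le
  -- the key extremality lemma: posSel is maximized by the top-k threshold rule
  have hmax : ∀ t, D.IsSelRule t → D.selRate t = D.muk k → D.posSel t ≤ A := by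
    intro t ht hsel
    have hsplit : D.posSel t = (∑ i ∈ Finset.range k, D.s i * D.w i * t i)
        + ∑ i ∈ Finset.Ico k D.m, D.s i * D.w i * t i := by
      rw [CalibScore.posSel]; exact (Finset.sum_range_add_sum_Ico _ hkm').symm
    have hselsplit : (∑ i ∈ Finset.range k, D.w i * t i)
        + ∑ i ∈ Finset.Ico k D.m, D.w i * t i = D.muk k := by
      rw [← hsel, CalibScore.selRate]; exact Finset.sum_range_add_sum_Ico _ hkm'
    have h1 : ∑ i ∈ Finset.Ico k D.m, D.s i * D.w i * t i
        ≤ c * ∑ i ∈ Finset.Ico k D.m, D.w i * t i := by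
      rw [Finset.mul_sum]
      apply Finset.sum_le_sum
      intro i hi
      obtain ⟨hki, him⟩ := Finset.mem_Ico.mp hi
      have hwt : 0 ≤ D.w i * t i := mul_nonneg (D.w_pos i him).le (ht i him).1
      nlinarith [hcs' i hki him]
    have heq : ∑ i ∈ Finset.Ico k D.m, D.w i * t i
        = ∑ i ∈ Finset.range k, D.w i * (1 - t i) := by
      have e : ∑ i ∈ Finset.range k, D.w i * (1 - t i)
          = (∑ i ∈ Finset.range k, D.w i) - ∑ i ∈ Finset.range k, D.w i * t i := by
        rw [← Finset.sum_sub_distrib]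
        exact Finset.sum_congr rfl fun i _ => by ring
      rw [e, ← hμ]; linarith [hselsplit]
    have h3 : (∑ i ∈ Finset.range k, D.s i * D.w i * t i)
        + ∑ i ∈ Finset.range k, c * (D.w i * (1 - t i)) ≤ A := by
      rw [hAdef, ← Finset.sum_add_distrib]
      apply Finset.sum_le_sum
      intro i hi
      have hik := Finset.mem_range.mp hi
      have him := lt_of_lt_of_le hik hkm'
      have hw := (D.w_pos i him).le
      have ht1 := (ht i him).2
      nlinarith [mul_nonneg (mul_nonneg (sub_nonneg.mpr (hcs i hik)) hw)
        (sub_nonneg.mpr ht1)]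
    have h2 : c * ∑ i ∈ Finset.Ico k D.m, D.w i * t i
        = ∑ i ∈ Finset.range k, c * (D.w i * (1 - t i)) := by
      rw [heq, Finset.mul_sum]
    linarith [hsplit, h1, h3, h2.le, h2.ge]
  -- the threshold rule
  set t0 : ℕ → ℝ := fun i => if i < k then 1 else 0 with ht0
  have ht0rule : D.IsSelRule t0 := by
    intro i _; by_cases h : i < k <;> simp [ht0, h]
  have ht0sel : D.selRate t0 = D.muk k := by
    rw [CalibScore.selRate, ← Finset.sum_range_add_sum_Ico (fun i => D.w i * t0 i) hkm', hμ]
    have e1 : ∑ i ∈ Finset.range k, D.w i * t0 i = ∑ i ∈ Finset.range k, D.w i :=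
      Finset.sum_congr rfl fun i hi => by simp [ht0, Finset.mem_range.mp hi]
    have e2 : ∑ i ∈ Finset.Ico k D.m, D.w i * t0 i = 0 :=
      Finset.sum_eq_zero fun i hi => by
        simp [ht0, Nat.not_lt.mpr (Finset.mem_Ico.mp hi).1]
    rw [e1, e2, add_zero]
  have ht0pos : D.posSel t0 = A := by
    rw [CalibScore.posSel,
      ← Finset.sum_range_add_sum_Ico (fun i => D.s i * D.w i * t0 i) hkm', hAdef]
    have e1 : ∑ i ∈ Finset.range k, D.s i * D.w i * t0 i
        = ∑ i ∈ Finset.range k, D.s i * D.w i :=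
      Finset.sum_congr rfl fun i hi => by simp [ht0, Finset.mem_range.mp hi]
    have e2 : ∑ i ∈ Finset.Ico k D.m, D.s i * D.w i * t0 i = 0 :=
      Finset.sum_eq_zero fun i hi => by
        simp [ht0, Nat.not_lt.mpr (Finset.mem_Ico.mp hi).1]
    rw [e1, e2, add_zero]
  have hWeq : (1 : ℝ) - D.muk k = W := by linarith
  have ht0ppv : D.ppv t0 = A / D.muk k := by rw [CalibScore.ppv, ht0sel, ht0pos]
  have ht0forr : D.forr t0 = B / W := by
    rw [CalibScore.forr, ht0sel, ht0pos, hπ, hWeq,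
      show A + B - A = B from by ring]
  have hBμAW : B * D.muk k ≤ A * W := by
    nlinarith [mul_le_mul_of_nonneg_right hAc hWpos.le,
      mul_le_mul_of_nonneg_right hBc hμpos.le]
  have hq0π : B / W ≤ D.pi := by
    rw [div_le_iff₀ hWpos]
    have hB1 : B * D.muk k + B * W = B := by linear_combination B * hμW
    have hπW : D.pi * W = A * W + B * W := by rw [hπ]; ring
    linarith
  have hπp0 : D.pi ≤ A / D.muk k := by
    rw [le_div_iff₀ hμpos]
    have hA1 : A * D.muk k + A * W = A := by linear_combination A * hμW
    have hπμ : D.pi * D.muk k = A * D.muk k + B * D.muk k := by rw [hπ]; ring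
    linarith
  have hfeas : D.FeasibleWith (D.muk k) (A / D.muk k) (B / W) :=
    ⟨hμpos, by linarith, t0, ht0rule, ht0sel, ht0ppv, ht0forr⟩
  have hgreat : IsGreatest
      {p | ∃ q, D.FeasibleWith (D.muk k) p q ∧ q ≤ D.pi ∧ D.pi ≤ p} (A / D.muk k) := by
    constructor
    · exact ⟨B / W, hfeas, hq0π, hπp0⟩
    · rintro p ⟨q, ⟨_, _, t, ht, hsel, hppv, _⟩, _, _⟩
      rw [← hppv, CalibScore.ppv, hsel]
      exact (div_le_div_iff_of_pos_right hμpos).mpr (hmax t ht hsel)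
  have hleast : IsLeast
      {q | ∃ p, D.FeasibleWith (D.muk k) p q ∧ q ≤ D.pi ∧ D.pi ≤ p} (B / W) := by
    constructor
    · exact ⟨A / D.muk k, hfeas, hq0π, hπp0⟩
    · rintro q ⟨p, ⟨_, _, t, ht, hsel, _, hforr⟩, _, _⟩
      rw [← hforr, CalibScore.forr, hsel, hWeq]
      exact (div_le_div_iff_of_pos_right hWpos).mpr (by linarith [hmax t ht hsel])
  have hqstar : D.qStar (D.muk k) = B / W := hleast.csInf_eq
  have hpstar : D.pStar (D.muk k) = A / D.muk k := hgreat.csSup_eq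
  refine ⟨?_, ?_, ?_⟩
  · rw [hqstar, hpstar, hWeq,
      show D.muk k * (A / D.muk k) = A from by field_simp,
      show D.pi - A = B from by linarith]
  · rw [hqstar]
  · intro hkm1
    subst hkm1
    have hone : Finset.Ico (D.m - 1) D.m = {D.m - 1} := by
      ext i
      simp only [Finset.mem_Ico, Finset.mem_singleton]
      omega
    have hB' : B = D.s (D.m - 1) * D.w (D.m - 1) := by
      rw [hBdef, hone, Finset.sum_singleton]
    have hW' : W = D.w (D.m - 1) := by rw [hWdef, hone, Finset.sum_singleton]
    rw [hqstar, hB', hW', mul_div_assoc,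
      div_self (D.w_pos _ (by omega)).ne', mul_one]
end

section
/- If (p,q) ≠ (π,π) is a feasible pair with q ≤ p, attained by a nonconstant classifier based on S with selection rate μ ∈ (0,1), then s_m ≤ q*(μ) ≤ q < π < p ≤ p*(μ) ≤ s_1. -/
open Finset

namespace CalibScore

lemma s_le_s0 (D : CalibScore) {i : ℕ} (hi : i < D.m) : D.s i ≤ D.s 0 := by
  rcases Nat.eq_zero_or_pos i with h0 | h0
  · simp [h0]
  · exact (D.s_desc 0 i h0 hi).le

lemma sm_le_s (D : CalibScore) {i : ℕ} (hi : i < D.m) : D.s (D.m - 1) ≤ D.s i := by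
  rcases eq_or_lt_of_le (Nat.le_sub_one_of_lt hi) with h0 | h0
  · rw [h0]
  · exact (D.s_desc i (D.m - 1) h0 (Nat.sub_lt (by omega) one_pos)).le

lemma posSel_le (D : CalibScore) (t : ℕ → ℝ) (ht : D.IsSelRule t) :
    D.posSel t ≤ D.s 0 * D.selRate t := by
  rw [selRate, Finset.mul_sum]
  apply Finset.sum_le_sum
  intro i hi
  rw [Finset.mem_range] at hi
  have hw := (D.w_pos i hi).le
  have ht0 := (ht i hi).1
  have : D.s i * (D.w i * t i) ≤ D.s 0 * (D.w i * t i) :=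
    mul_le_mul_of_nonneg_right (D.s_le_s0 hi) (mul_nonneg hw ht0)
  linarith [this]

lemma pi_sub_posSel (D : CalibScore) (t : ℕ → ℝ) :
    D.pi - D.posSel t = ∑ i ∈ Finset.range D.m, D.s i * D.w i * (1 - t i) := by
  rw [pi, posSel, ← Finset.sum_sub_distrib]
  exact Finset.sum_congr rfl fun i _ => by ring

lemma one_sub_selRate (D : CalibScore) (t : ℕ → ℝ) :
    1 - D.selRate t = ∑ i ∈ Finset.range D.m, D.w i * (1 - t i) := by
  have h1 : ∑ i ∈ Finset.range D.m, D.w i * (1 - t i)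
      = (∑ i ∈ Finset.range D.m, D.w i) - ∑ i ∈ Finset.range D.m, D.w i * t i := by
    rw [← Finset.sum_sub_distrib]
    exact Finset.sum_congr rfl fun i _ => by ring
  rw [h1, D.w_sum, selRate]

lemma posSel_ge (D : CalibScore) (t : ℕ → ℝ) (ht : D.IsSelRule t) :
    D.s (D.m - 1) * (1 - D.selRate t) ≤ D.pi - D.posSel t := by
  rw [pi_sub_posSel, one_sub_selRate, Finset.mul_sum]
  apply Finset.sum_le_sum
  intro i hi
  rw [Finset.mem_range] at hi
  have hw := (D.w_pos i hi).le
  have ht1 := (ht i hi).2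
  have : D.s (D.m - 1) * (D.w i * (1 - t i)) ≤ D.s i * (D.w i * (1 - t i)) :=
    mul_le_mul_of_nonneg_right (D.sm_le_s hi) (mul_nonneg hw (by linarith))
  linarith [this]

lemma ppv_le_s0 (D : CalibScore) (t : ℕ → ℝ) (ht : D.IsSelRule t)
    (hμ : 0 < D.selRate t) : D.ppv t ≤ D.s 0 := by
  rw [ppv, div_le_iff₀ hμ]
  exact D.posSel_le t ht

lemma forr_ge_sm (D : CalibScore) (t : ℕ → ℝ) (ht : D.IsSelRule t)
    (hμ : D.selRate t < 1) : D.s (D.m - 1) ≤ D.forr t := by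
  rw [forr, le_div_iff₀ (by linarith)]
  linarith [D.posSel_ge t ht]

end CalibScore

/-- If `(p, q) ≠ (π, π)` is a feasible pair with `q ≤ p`, attained
by a nonconstant classifier based on `S` with selection rate `μ ∈ (0, 1)`, then
`s_m ≤ q*(μ) ≤ q < π < p ≤ p*(μ) ≤ s_1`. -/
theorem stmt12 (D : CalibScore) (p q μ : ℝ) (h : D.FeasibleWith μ p q)
    (hqp : q ≤ p) (hne : (p, q) ≠ (D.pi, D.pi)) :
    D.s (D.m - 1) ≤ D.qStar μ ∧ D.qStar μ ≤ q ∧ q < D.pi ∧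
      D.pi < p ∧ p ≤ D.pStar μ ∧ D.pStar μ ≤ D.s 0 := by
  obtain ⟨hμ0, hμ1, t, ht, hsel, hppv, hforr⟩ := h
  have hμ1' : (0:ℝ) < 1 - μ := by linarith
  have hps : D.posSel t = p * μ := by
    rw [← hppv, CalibScore.ppv, hsel, div_mul_cancel₀]; exact ne_of_gt hμ0
  have hpi : D.pi = μ * p + (1 - μ) * q := by
    have : q * (1 - μ) = D.pi - D.posSel t := by
      rw [← hforr, CalibScore.forr, hsel, div_mul_cancel₀]; exact ne_of_gt hμ1'
    rw [hps] at this; linarith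
  have hqlt : q < p := by
    rcases lt_or_eq_of_le hqp with h' | h'
    · exact h'
    · exfalso; apply hne; rw [h'] at hpi ⊢
      have : D.pi = p := by linarith [hpi]
      simp [this]
  have hqpi : q < D.pi := by nlinarith
  have hpip : D.pi < p := by nlinarith
  have hpmem : p ∈ {p | ∃ q, D.FeasibleWith μ p q ∧ q ≤ D.pi ∧ D.pi ≤ p} :=
    ⟨q, ⟨hμ0, hμ1, t, ht, hsel, hppv, hforr⟩, hqpi.le, hpip.le⟩
  have hqmem : q ∈ {q | ∃ p, D.FeasibleWith μ p q ∧ q ≤ D.pi ∧ D.pi ≤ p} :=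
    ⟨p, ⟨hμ0, hμ1, t, ht, hsel, hppv, hforr⟩, hqpi.le, hpip.le⟩
  have hub : ∀ x ∈ {p | ∃ q, D.FeasibleWith μ p q ∧ q ≤ D.pi ∧ D.pi ≤ p}, x ≤ D.s 0 := by
    rintro x ⟨q', ⟨_, _, t', ht', hsel', hppv', _⟩, _, _⟩
    rw [← hppv']
    exact D.ppv_le_s0 t' ht' (by rw [hsel']; exact hμ0)
  have hlb : ∀ x ∈ {q | ∃ p, D.FeasibleWith μ p q ∧ q ≤ D.pi ∧ D.pi ≤ p},
      D.s (D.m - 1) ≤ x := by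
    rintro x ⟨p', ⟨_, _, t', ht', hsel', _, hforr'⟩, _, _⟩
    rw [← hforr']
    exact D.forr_ge_sm t' ht' (by rw [hsel']; exact hμ1)
  refine ⟨le_csInf ⟨q, hqmem⟩ hlb, csInf_le ⟨D.s (D.m - 1), hlb⟩ hqmem, hqpi, hpip,
    le_csSup ⟨D.s 0, hub⟩ hpmem, csSup_le ⟨p, hpmem⟩ hub⟩
end

section
/- Let R = R(S,A) be a classifier, nonconstant within each group, satisfying P(Y=1 | R=1, A=a) = p and P(Y=1 | R=0, A=a) = q for both groups a, with (p,q) ≠ (π,π) and q ≤ p. Then the deviation from separation Δ_sep(R) := E_{A,Y} TV(P(R | A,Y), P(R | Y)) satisfies Δ_sep(R) = K · ((1−μ)/(p−π) − μ(p−π)/(π(1−π))), where K := 2 P(A=0) P(A=1) |π¹ − π⁰|, π := P(Y=1), and μ := P(R=1). Moreover, for fixed μ, the right-hand side is nonincreasing in p on p > π. -/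
open Finset

attribute [local instance] Classical.propDecidable

/-!
Two-group setting.  `(Ω, P)` is a finite probability space, `Y` a `{0,1}`-valued
target, `A` a `{0,1}`-valued group attribute, and `S` a (finite-valued) score.
Events are predicates on `Ω`; `prob` and `cprob` are (conditional) probabilities.
-/

variable {Ω : Type*} [Fintype Ω]

/-- Probability of an event under a pmf `P` on the finite outcome space `Ω`. -/
noncomputable def prob (P : Ω → ℝ) (E : Ω → Prop) : ℝ :=
  ∑ ω, if E ω then P ω else 0

/-- Conditional probability `P(E ∣ F)`. -/
noncomputable def cprob (P : Ω → ℝ) (E F : Ω → Prop) : ℝ :=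
  prob P (fun ω => E ω ∧ F ω) / prob P F

/-- `P` is a probability mass function on `Ω`. -/
structure IsPMF (P : Ω → ℝ) : Prop where
  nonneg : ∀ ω, 0 ≤ P ω
  sum_one : ∑ ω, P ω = 1

/-- The score `S` is group-calibrated: `P(Y = 1 ∣ S = s, A = a) = s` whenever
`P(S = s, A = a) > 0`. -/
def GroupCalibrated (P : Ω → ℝ) (Y A : Ω → Bool) (S : Ω → ℝ) : Prop :=
  ∀ (sv : ℝ) (a : Bool), 0 < prob P (fun ω => S ω = sv ∧ A ω = a) →
    cprob P (fun ω => Y ω = true) (fun ω => S ω = sv ∧ A ω = a) = sv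

/-- `R` is a classifier based on `(S, A)`: within each group, `R` depends on `S`
alone, i.e. `P(R = 1 ∣ S, Y, A = a) = P(R = 1 ∣ S, A = a)`. -/
def IsClassifier (P : Ω → ℝ) (Y A : Ω → Bool) (S : Ω → ℝ) (R : Ω → Bool) : Prop :=
  ∀ (a : Bool) (sv : ℝ) (yv : Bool),
    0 < prob P (fun ω => S ω = sv ∧ Y ω = yv ∧ A ω = a) →
    cprob P (fun ω => R ω = true) (fun ω => S ω = sv ∧ Y ω = yv ∧ A ω = a) =
      cprob P (fun ω => R ω = true) (fun ω => S ω = sv ∧ A ω = a)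

/-- `(p, q)` belongs to the subgroup-feasible region `C^a`: it is attained as
`(P(Y = 1 ∣ R = 1, A = a), P(Y = 1 ∣ R = 0, A = a))` by some `{0,1}`-valued `R`
with `P(R = 1 ∣ S, Y, A = a) = P(R = 1 ∣ S, A = a)` and `0 < P(R = 1 ∣ A = a) < 1`.
Such a (possibly randomized) classifier is determined within the group by its
selection rule `τ sv = P(R = 1 ∣ S = sv, A = a)`; by group-calibration,
`P(R = 1 ∣ A = a) = ∑_s P(S = s ∣ a) τ s` and
`P(Y = 1, R = 1 ∣ A = a) = ∑_s s P(S = s ∣ a) τ s`. -/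
def SubgroupFeasible (P : Ω → ℝ) (Y A : Ω → Bool) (S : Ω → ℝ)
    (a : Bool) (p q : ℝ) : Prop :=
  ∃ τ : ℝ → ℝ, (∀ sv, 0 ≤ τ sv ∧ τ sv ≤ 1) ∧
    0 < (∑ sv ∈ Finset.univ.image S,
          cprob P (fun ω => S ω = sv) (fun ω => A ω = a) * τ sv) ∧
    (∑ sv ∈ Finset.univ.image S,
          cprob P (fun ω => S ω = sv) (fun ω => A ω = a) * τ sv) < 1 ∧
    p = (∑ sv ∈ Finset.univ.image S,
          sv * cprob P (fun ω => S ω = sv) (fun ω => A ω = a) * τ sv) /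
        (∑ sv ∈ Finset.univ.image S,
          cprob P (fun ω => S ω = sv) (fun ω => A ω = a) * τ sv) ∧
    q = (cprob P (fun ω => Y ω = true) (fun ω => A ω = a) -
          (∑ sv ∈ Finset.univ.image S,
            sv * cprob P (fun ω => S ω = sv) (fun ω => A ω = a) * τ sv)) /
        (1 - (∑ sv ∈ Finset.univ.image S,
          cprob P (fun ω => S ω = sv) (fun ω => A ω = a) * τ sv))

/-- Deviation from separation
`Δ_sep(R) = E_{A,Y} TV(P(R ∣ A, Y), P(R ∣ Y))`, with
`TV(P, Q) = (1/2) ∑_r |P(r) − Q(r)|`. -/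
noncomputable def deltaSep (P : Ω → ℝ) (Y A R : Ω → Bool) : ℝ :=
  ∑ a : Bool, ∑ y : Bool,
    prob P (fun ω => A ω = a) * cprob P (fun ω => Y ω = y) (fun ω => A ω = a) *
      ((1 / 2) * ∑ r : Bool,
        |cprob P (fun ω => R ω = r) (fun ω => A ω = a ∧ Y ω = y) -
          cprob P (fun ω => R ω = r) (fun ω => Y ω = y)|)

section Stmt18Aux
variable {Ω : Type*} [Fintype Ω]

lemma prob_congr (P : Ω → ℝ) {E F : Ω → Prop} (h : ∀ ω, E ω ↔ F ω) :
    prob P E = prob P F := by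
  unfold prob; apply Finset.sum_congr rfl; intro ω _
  by_cases hE : E ω
  · simp [hE, (h ω).1 hE]
  · simp only [if_neg hE, if_neg (fun hF => hE ((h ω).2 hF))]

lemma prob_nonneg (P : Ω → ℝ) (hP : IsPMF P) (E : Ω → Prop) : 0 ≤ prob P E := by
  apply Finset.sum_nonneg; intro ω _
  split
  · exact hP.nonneg ω
  · exact le_refl _

lemma prob_split_bool (P : Ω → ℝ) (E : Ω → Prop) (B : Ω → Bool) :
    prob P E = prob P (fun ω => E ω ∧ B ω = true) +
      prob P (fun ω => E ω ∧ B ω = false) := by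
  unfold prob
  rw [← Finset.sum_add_distrib]
  apply Finset.sum_congr rfl; intro ω _
  cases hB : B ω <;> by_cases hE : E ω <;> simp [hE, hB]

lemma prob_true (P : Ω → ℝ) (hP : IsPMF P) : prob P (fun _ => True) = 1 := by
  unfold prob; simpa using hP.sum_one

lemma prob_mono (P : Ω → ℝ) (hP : IsPMF P) {E F : Ω → Prop}
    (h : ∀ ω, E ω → F ω) : prob P E ≤ prob P F := by
  apply Finset.sum_le_sum; intro ω _
  by_cases hE : E ω
  · simp [hE, h ω hE]
  · simp [hE]; split <;> [exact hP.nonneg ω; exact le_refl _]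

lemma cprob_nonneg (P : Ω → ℝ) (hP : IsPMF P) (E F : Ω → Prop) :
    0 ≤ cprob P E F :=
  div_nonneg (prob_nonneg P hP _) (prob_nonneg P hP _)

lemma cprob_le_one (P : Ω → ℝ) (hP : IsPMF P) (E F : Ω → Prop) :
    cprob P E F ≤ 1 := by
  unfold cprob
  rcases eq_or_lt_of_le (prob_nonneg P hP F) with h | h
  · rw [← h]; simp
  · exact div_le_one_of_le₀ (prob_mono P hP fun ω hω => hω.2) h.le

lemma prob_of_cprob (P : Ω → ℝ) {E F : Ω → Prop} (hF : prob P F ≠ 0) :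
    prob P (fun ω => E ω ∧ F ω) = cprob P E F * prob P F := by
  unfold cprob; field_simp

lemma cprob_compl (P : Ω → ℝ) (B : Ω → Bool) {F : Ω → Prop}
    (hF : prob P F ≠ 0) :
    cprob P (fun ω => B ω = false) F = 1 - cprob P (fun ω => B ω = true) F := by
  unfold cprob
  have h := prob_split_bool P F B
  have h1 : prob P (fun ω => B ω = true ∧ F ω) = prob P (fun ω => F ω ∧ B ω = true) :=
    prob_congr P fun ω => and_comm
  have h2 : prob P (fun ω => B ω = false ∧ F ω) = prob P (fun ω => F ω ∧ B ω = false) :=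
    prob_congr P fun ω => and_comm
  rw [h1, h2]
  field_simp
  linarith


lemma cancel_aux (a b c d : ℝ) (hb : b ≠ 0) :
    a * b * (1 / 2 * (2 * (c / (b * d)))) = a * (c / d) := by
  rcases eq_or_ne d 0 with rfl | hd
  · simp
  · field_simp

lemma cancel_aux' (a b c d : ℝ) (hb : b ≠ 0) :
    a * b * (1 / 2 * (2 * -(c / (b * d)))) = -(a * (c / d)) := by
  rcases eq_or_ne d 0 with rfl | hd
  · simp
  · field_simp

end Stmt18Aux

set_option maxHeartbeats 1600000 in
/-- Let `R = R(S, A)` be a classifier, nonconstant within each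
group, satisfying `P(Y = 1 ∣ R = 1, A = a) = p` and `P(Y = 1 ∣ R = 0, A = a) = q`
for both groups, with `(p, q) ≠ (π, π)` and `q ≤ p`.  Then the deviation from
separation satisfies
`Δ_sep(R) = K ((1 − μ)/(p − π) − μ (p − π)/(π(1 − π)))`, where
`K = 2 P(A = 0) P(A = 1) |π¹ − π⁰|`, `π = P(Y = 1)` and `μ = P(R = 1)`.
Moreover, for fixed `μ`, the right-hand side is nonincreasing in `p` on `p > π`. -/
theorem stmt18 (P : Ω → ℝ) (hP : IsPMF P) (Y A R : Ω → Bool) (S : Ω → ℝ)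
    (hA : ∀ a : Bool, 0 < prob P (fun ω => A ω = a))
    (hcal : GroupCalibrated P Y A S)
    (hR : IsClassifier P Y A S R)
    (hnc : ∀ a : Bool, 0 < cprob P (fun ω => R ω = true) (fun ω => A ω = a) ∧
      cprob P (fun ω => R ω = true) (fun ω => A ω = a) < 1)
    (p q : ℝ)
    (hp : ∀ a : Bool,
      cprob P (fun ω => Y ω = true) (fun ω => R ω = true ∧ A ω = a) = p)
    (hq : ∀ a : Bool,
      cprob P (fun ω => Y ω = true) (fun ω => R ω = false ∧ A ω = a) = q)
    (hqp : q ≤ p)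
    (hne : (p, q) ≠ (prob P (fun ω => Y ω = true), prob P (fun ω => Y ω = true))) :
    let π : ℝ := prob P (fun ω => Y ω = true)
    let μ : ℝ := prob P (fun ω => R ω = true)
    let K : ℝ := 2 * prob P (fun ω => A ω = false) * prob P (fun ω => A ω = true) *
      |cprob P (fun ω => Y ω = true) (fun ω => A ω = true) -
        cprob P (fun ω => Y ω = true) (fun ω => A ω = false)|
    deltaSep P Y A R = K * ((1 - μ) / (p - π) - μ * (p - π) / (π * (1 - π))) ∧
      AntitoneOn (fun p' : ℝ => K * ((1 - μ) / (p' - π) - μ * (p' - π) / (π * (1 - π))))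
        (Set.Ioi π) := by
  intro PI MU K
  set w : Bool → ℝ := fun a => prob P (fun ω => A ω = a) with hwdef
  set m : Bool → ℝ := fun a => cprob P (fun ω => R ω = true) (fun ω => A ω = a) with hmdef
  have hwpos : ∀ a, 0 < w a := hA
  have hwne : ∀ a, w a ≠ 0 := fun a => (hwpos a).ne'
  have hm0 : ∀ a, 0 < m a := fun a => (hnc a).1
  have hm1 : ∀ a, m a < 1 := fun a => (hnc a).2
  -- w sums to 1
  have hwsum : w false + w true = 1 := by
    have h := prob_split_bool P (fun _ : Ω => True) A
    have h1 : prob P (fun ω => True ∧ A ω = true) = w true := prob_congr P (fun ω => by simp)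
    have h2 : prob P (fun ω => True ∧ A ω = false) = w false := prob_congr P (fun ω => by simp)
    rw [prob_true P hP, h1, h2] at h
    linarith
  -- joint (R = r, A = a)
  have hRA1 : ∀ a, prob P (fun ω => R ω = true ∧ A ω = a) = m a * w a := fun a =>
    prob_of_cprob P (hwne a)
  have hRA0 : ∀ a, prob P (fun ω => R ω = false ∧ A ω = a) = (1 - m a) * w a := by
    intro a
    have h := prob_split_bool P (fun ω => A ω = a) R
    have h1 : prob P (fun ω => A ω = a ∧ R ω = true) = m a * w a := by
      rw [prob_congr P (fun ω => (and_comm : _ ↔ _)), hRA1 a]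
    have h2 : prob P (fun ω => A ω = a ∧ R ω = false)
        = prob P (fun ω => R ω = false ∧ A ω = a) :=
      prob_congr P (fun ω => and_comm)
    rw [h1, h2] at h
    show prob P (fun ω => R ω = false ∧ A ω = a) = _
    linarith [h]
  have hRA1pos : ∀ a, 0 < prob P (fun ω => R ω = true ∧ A ω = a) := by
    intro a; rw [hRA1 a]; exact mul_pos (hm0 a) (hwpos a)
  have hRA0pos : ∀ a, 0 < prob P (fun ω => R ω = false ∧ A ω = a) := by
    intro a; rw [hRA0 a]; exact mul_pos (by linarith [hm1 a]) (hwpos a)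
  -- atoms
  have hJ11 : ∀ a, prob P (fun ω => Y ω = true ∧ R ω = true ∧ A ω = a)
      = p * (m a * w a) := by
    intro a
    rw [prob_of_cprob P (hRA1pos a).ne', hp a, hRA1 a]
  have hJ10 : ∀ a, prob P (fun ω => Y ω = true ∧ R ω = false ∧ A ω = a)
      = q * ((1 - m a) * w a) := by
    intro a
    rw [prob_of_cprob P (hRA0pos a).ne', hq a, hRA0 a]
  have hJ01 : ∀ a, prob P (fun ω => Y ω = false ∧ R ω = true ∧ A ω = a)
      = (1 - p) * (m a * w a) := by
    intro a
    have h := prob_split_bool P (fun ω => R ω = true ∧ A ω = a) Y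
    have h1 : prob P (fun ω => (R ω = true ∧ A ω = a) ∧ Y ω = true)
        = prob P (fun ω => Y ω = true ∧ R ω = true ∧ A ω = a) :=
      prob_congr P (fun ω => by tauto)
    have h2 : prob P (fun ω => (R ω = true ∧ A ω = a) ∧ Y ω = false)
        = prob P (fun ω => Y ω = false ∧ R ω = true ∧ A ω = a) :=
      prob_congr P (fun ω => by tauto)
    rw [h1, h2, hJ11 a, hRA1 a] at h
    linarith
  have hJ00 : ∀ a, prob P (fun ω => Y ω = false ∧ R ω = false ∧ A ω = a)
      = (1 - q) * ((1 - m a) * w a) := by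
    intro a
    have h := prob_split_bool P (fun ω => R ω = false ∧ A ω = a) Y
    have h1 : prob P (fun ω => (R ω = false ∧ A ω = a) ∧ Y ω = true)
        = prob P (fun ω => Y ω = true ∧ R ω = false ∧ A ω = a) :=
      prob_congr P (fun ω => by tauto)
    have h2 : prob P (fun ω => (R ω = false ∧ A ω = a) ∧ Y ω = false)
        = prob P (fun ω => Y ω = false ∧ R ω = false ∧ A ω = a) :=
      prob_congr P (fun ω => by tauto)
    rw [h1, h2, hJ10 a, hRA0 a] at h
    linarith
  -- marginals in Y and A
  have hYA : ∀ a, prob P (fun ω => Y ω = true ∧ A ω = a)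
      = (p * m a + q * (1 - m a)) * w a := by
    intro a
    have h := prob_split_bool P (fun ω => Y ω = true ∧ A ω = a) R
    have h1 : prob P (fun ω => (Y ω = true ∧ A ω = a) ∧ R ω = true)
        = prob P (fun ω => Y ω = true ∧ R ω = true ∧ A ω = a) :=
      prob_congr P (fun ω => by tauto)
    have h2 : prob P (fun ω => (Y ω = true ∧ A ω = a) ∧ R ω = false)
        = prob P (fun ω => Y ω = true ∧ R ω = false ∧ A ω = a) :=
      prob_congr P (fun ω => by tauto)
    rw [h1, h2, hJ11 a, hJ10 a] at h
    rw [h]; ring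
  have hY'A : ∀ a, prob P (fun ω => Y ω = false ∧ A ω = a)
      = ((1 - p) * m a + (1 - q) * (1 - m a)) * w a := by
    intro a
    have h := prob_split_bool P (fun ω => Y ω = false ∧ A ω = a) R
    have h1 : prob P (fun ω => (Y ω = false ∧ A ω = a) ∧ R ω = true)
        = prob P (fun ω => Y ω = false ∧ R ω = true ∧ A ω = a) :=
      prob_congr P (fun ω => by tauto)
    have h2 : prob P (fun ω => (Y ω = false ∧ A ω = a) ∧ R ω = false)
        = prob P (fun ω => Y ω = false ∧ R ω = false ∧ A ω = a) :=
      prob_congr P (fun ω => by tauto)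
    rw [h1, h2, hJ01 a, hJ00 a] at h
    rw [h]; ring
  -- R marginal
  have hMU : MU = m false * w false + m true * w true := by
    have h := prob_split_bool P (fun ω => R ω = true) A
    have h1 : prob P (fun ω => R ω = true ∧ A ω = true) = m true * w true := hRA1 true
    have h2 : prob P (fun ω => R ω = true ∧ A ω = false) = m false * w false := hRA1 false
    rw [h1, h2] at h
    rw [show MU = prob P (fun ω => R ω = true) from rfl, h]; ring
  -- Y marginal
  have hPI : PI = p * MU + q * (1 - MU) := by
    have h := prob_split_bool P (fun ω => Y ω = true) A
    have h1 : prob P (fun ω => Y ω = true ∧ A ω = true)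
        = (p * m true + q * (1 - m true)) * w true := hYA true
    have h2 : prob P (fun ω => Y ω = true ∧ A ω = false)
        = (p * m false + q * (1 - m false)) * w false := hYA false
    rw [h1, h2] at h
    rw [show PI = prob P (fun ω => Y ω = true) from rfl, h, hMU]
    linear_combination q * hwsum
  -- bounds
  have hq0 : 0 ≤ q := by rw [← hq false]; exact cprob_nonneg P hP _ _
  have hp1 : p ≤ 1 := by rw [← hp false]; exact cprob_le_one P hP _ _
  have hqltp : q < p := by
    rcases eq_or_lt_of_le hqp with h | h
    · exfalso; apply hne
      have : PI = p := by rw [hPI, ← h]; ring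
      rw [show prob P (fun ω => Y ω = true) = PI from rfl, this, h]
    · exact h
  have hp0 : 0 < p := lt_of_le_of_lt hq0 hqltp
  have hq1 : q < 1 := lt_of_lt_of_le hqltp hp1
  have hMU0 : 0 < MU := by
    rw [hMU]
    have := mul_pos (hm0 false) (hwpos false)
    have := mul_pos (hm0 true) (hwpos true)
    linarith
  have hMU1 : MU < 1 := by
    rw [hMU]
    nlinarith [hm1 false, hm1 true, hwpos false, hwpos true, hwsum]
  have hPI0 : 0 < PI := by rw [hPI]; nlinarith
  have hPI1 : PI < 1 := by rw [hPI]; nlinarith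
  -- per-group conditional positivity
  have hPa0 : ∀ a, 0 < p * m a + q * (1 - m a) := by
    intro a; nlinarith [hm0 a, hm1 a]
  have hQa0 : ∀ a, 0 < (1 - p) * m a + (1 - q) * (1 - m a) := by
    intro a; nlinarith [hm0 a, hm1 a]
  -- reordered denominators
  have hAY : ∀ a, prob P (fun ω => A ω = a ∧ Y ω = true)
      = (p * m a + q * (1 - m a)) * w a := by
    intro a
    rw [prob_congr P (fun ω => (and_comm : A ω = a ∧ Y ω = true ↔ _)), hYA a]
  have hAY' : ∀ a, prob P (fun ω => A ω = a ∧ Y ω = false)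
      = ((1 - p) * m a + (1 - q) * (1 - m a)) * w a := by
    intro a
    rw [prob_congr P (fun ω => (and_comm : A ω = a ∧ Y ω = false ↔ _)), hY'A a]
  have hAYpos : ∀ a, 0 < prob P (fun ω => A ω = a ∧ Y ω = true) := by
    intro a; rw [hAY a]; exact mul_pos (hPa0 a) (hwpos a)
  have hAY'pos : ∀ a, 0 < prob P (fun ω => A ω = a ∧ Y ω = false) := by
    intro a; rw [hAY' a]; exact mul_pos (hQa0 a) (hwpos a)
  have hYf : prob P (fun ω => Y ω = false) = 1 - PI := by
    have h := prob_split_bool P (fun _ : Ω => True) Y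
    have h1 : prob P (fun ω => True ∧ Y ω = true) = prob P (fun ω => Y ω = true) :=
      prob_congr P (fun ω => by simp)
    have h2 : prob P (fun ω => True ∧ Y ω = false) = prob P (fun ω => Y ω = false) :=
      prob_congr P (fun ω => by simp)
    rw [prob_true P hP, h1, h2] at h
    have : prob P (fun ω => Y ω = true) = PI := rfl
    linarith [h, this.symm.le]
  have hRY1 : prob P (fun ω => R ω = true ∧ Y ω = true) = p * MU := by
    have h := prob_split_bool P (fun ω => R ω = true ∧ Y ω = true) A
    have h1 : prob P (fun ω => (R ω = true ∧ Y ω = true) ∧ A ω = true)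
        = prob P (fun ω => Y ω = true ∧ R ω = true ∧ A ω = true) :=
      prob_congr P (fun ω => by tauto)
    have h2 : prob P (fun ω => (R ω = true ∧ Y ω = true) ∧ A ω = false)
        = prob P (fun ω => Y ω = true ∧ R ω = true ∧ A ω = false) :=
      prob_congr P (fun ω => by tauto)
    rw [h1, h2, hJ11 true, hJ11 false] at h
    rw [h, hMU]; ring
  have hRY0 : prob P (fun ω => R ω = true ∧ Y ω = false) = (1 - p) * MU := by
    have h := prob_split_bool P (fun ω => R ω = true ∧ Y ω = false) A
    have h1 : prob P (fun ω => (R ω = true ∧ Y ω = false) ∧ A ω = true)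
        = prob P (fun ω => Y ω = false ∧ R ω = true ∧ A ω = true) :=
      prob_congr P (fun ω => by tauto)
    have h2 : prob P (fun ω => (R ω = true ∧ Y ω = false) ∧ A ω = false)
        = prob P (fun ω => Y ω = false ∧ R ω = true ∧ A ω = false) :=
      prob_congr P (fun ω => by tauto)
    rw [h1, h2, hJ01 true, hJ01 false] at h
    rw [h, hMU]; ring
  -- conditional values of R = true
  have c_t : ∀ a, cprob P (fun ω => R ω = true) (fun ω => A ω = a ∧ Y ω = true)
      = p * m a / (p * m a + q * (1 - m a)) := by
    intro a
    unfold cprob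
    have h1 : prob P (fun ω => R ω = true ∧ A ω = a ∧ Y ω = true)
        = prob P (fun ω => Y ω = true ∧ R ω = true ∧ A ω = a) :=
      prob_congr P (fun ω => by tauto)
    rw [h1, hJ11 a, hAY a]
    rw [div_eq_div_iff (mul_pos (hPa0 a) (hwpos a)).ne' (hPa0 a).ne']
    ring
  have c_f : ∀ a, cprob P (fun ω => R ω = true) (fun ω => A ω = a ∧ Y ω = false)
      = (1 - p) * m a / ((1 - p) * m a + (1 - q) * (1 - m a)) := by
    intro a
    unfold cprob
    have h1 : prob P (fun ω => R ω = true ∧ A ω = a ∧ Y ω = false)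
        = prob P (fun ω => Y ω = false ∧ R ω = true ∧ A ω = a) :=
      prob_congr P (fun ω => by tauto)
    rw [h1, hJ01 a, hAY' a]
    rw [div_eq_div_iff (mul_pos (hQa0 a) (hwpos a)).ne' (hQa0 a).ne']
    ring
  have g_t : cprob P (fun ω => R ω = true) (fun ω => Y ω = true) = p * MU / PI := by
    unfold cprob
    rw [hRY1]
  have g_f : cprob P (fun ω => R ω = true) (fun ω => Y ω = false)
      = (1 - p) * MU / (1 - PI) := by
    unfold cprob
    rw [hRY0, hYf]
  -- complements
  have d_t : ∀ a, cprob P (fun ω => R ω = false) (fun ω => A ω = a ∧ Y ω = true)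
      = 1 - p * m a / (p * m a + q * (1 - m a)) := by
    intro a; rw [cprob_compl P R (hAYpos a).ne', c_t a]
  have d_f : ∀ a, cprob P (fun ω => R ω = false) (fun ω => A ω = a ∧ Y ω = false)
      = 1 - (1 - p) * m a / ((1 - p) * m a + (1 - q) * (1 - m a)) := by
    intro a; rw [cprob_compl P R (hAY'pos a).ne', c_f a]
  have e_t : cprob P (fun ω => R ω = false) (fun ω => Y ω = true)
      = 1 - p * MU / PI := by
    rw [cprob_compl P R hPI0.ne', g_t]
  have e_f : cprob P (fun ω => R ω = false) (fun ω => Y ω = false)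
      = 1 - (1 - p) * MU / (1 - PI) := by
    rw [cprob_compl P R (by rw [hYf]; linarith : prob P (fun ω => Y ω = false) ≠ 0), g_f]
  have cY : ∀ a, cprob P (fun ω => Y ω = true) (fun ω => A ω = a)
      = p * m a + q * (1 - m a) := by
    intro a; unfold cprob; rw [hYA a, mul_div_assoc, div_self (hwne a), mul_one]
  have cY' : ∀ a, cprob P (fun ω => Y ω = false) (fun ω => A ω = a)
      = (1 - p) * m a + (1 - q) * (1 - m a) := by
    intro a; unfold cprob; rw [hY'A a, mul_div_assoc, div_self (hwne a), mul_one]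
  have hwf : prob P (fun ω => A ω = false) = w false := rfl
  have hwt : prob P (fun ω => A ω = true) = w true := rfl
  have hK : K = 2 * w false * w true *
      |p * m true + q * (1 - m true) - (p * m false + q * (1 - m false))| := by
    rw [show K = 2 * prob P (fun ω => A ω = false) * prob P (fun ω => A ω = true) *
      |cprob P (fun ω => Y ω = true) (fun ω => A ω = true) -
        cprob P (fun ω => Y ω = true) (fun ω => A ω = false)| from rfl,
      cY true, cY false, hwf, hwt]
  clear_value PI MU K
  constructor
  · simp only [deltaSep, Fintype.sum_bool]
    rw [c_t false, c_t true, c_f false, c_f true, d_t false, d_t true,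
      d_f false, d_f true, g_t, g_f, e_t, e_f, cY false, cY true,
      cY' false, cY' true, hwf, hwt]
    have habs : ∀ x y : ℝ, |x - y| + |1 - x - (1 - y)| = 2 * |x - y| := by
      intro x y
      rw [show (1:ℝ) - x - (1 - y) = -(x - y) by ring, abs_neg]
      ring
    simp only [habs]
    have nPa : ∀ a, p * m a + q * (1 - m a) ≠ 0 := fun a => (hPa0 a).ne'
    have nQa : ∀ a, (1 - p) * m a + (1 - q) * (1 - m a) ≠ 0 := fun a => (hQa0 a).ne'
    have nPI : PI ≠ 0 := hPI0.ne'
    have nPI' : (1:ℝ) - PI ≠ 0 := by linarith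
    have E1 : ∀ a, p * m a / (p * m a + q * (1 - m a)) - p * MU / PI
        = p * q * (m a - MU) / ((p * m a + q * (1 - m a)) * PI) := by
      intro a
      rw [hPI]
      have h1 : p * MU + q * (1 - MU) ≠ 0 := by rw [← hPI]; exact nPI
      field_simp [nPa a, h1]
      ring
    have E2 : ∀ a, (1 - p) * m a / ((1 - p) * m a + (1 - q) * (1 - m a))
          - (1 - p) * MU / (1 - PI)
        = (1 - p) * (1 - q) * (m a - MU) /
          (((1 - p) * m a + (1 - q) * (1 - m a)) * (1 - PI)) := by
      intro a
      rw [hPI]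
      have h1 : 1 - (p * MU + q * (1 - MU)) ≠ 0 := by rw [← hPI]; exact nPI'
      field_simp [nQa a, h1]
      ring
    rw [E1 true, E1 false, E2 true, E2 false]
    have hw1 : w true = 1 - w false := by linarith
    have hpmq : 0 < p - PI := by rw [hPI]; nlinarith
    rcases le_total (m false) (m true) with hc | hc
    · have hle1 : MU ≤ m true := by rw [hMU]; nlinarith [hwpos false, hwpos true]
      have hge0 : m false ≤ MU := by rw [hMU]; nlinarith [hwpos false, hwpos true]
      have s1 : (0:ℝ) ≤ p * q * (m true - MU) :=
        mul_nonneg (mul_nonneg hp0.le hq0) (by linarith)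
      have s2 : p * q * (m false - MU) ≤ 0 := by
        have := mul_nonneg (mul_nonneg hp0.le hq0) (sub_nonneg.2 hge0)
        linarith [this]
      have s3 : (0:ℝ) ≤ (1 - p) * (1 - q) * (m true - MU) :=
        mul_nonneg (mul_nonneg (by linarith) (by linarith)) (by linarith)
      have s4 : (1 - p) * (1 - q) * (m false - MU) ≤ 0 := by
        have := mul_nonneg (mul_nonneg (by linarith : (0:ℝ) ≤ 1 - p)
          (by linarith : (0:ℝ) ≤ 1 - q)) (sub_nonneg.2 hge0)
        linarith [this]
      rw [abs_of_nonneg (div_nonneg s1 (mul_pos (hPa0 true) hPI0).le),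
          abs_of_nonpos (div_nonpos_of_nonpos_of_nonneg s2
            (mul_pos (hPa0 false) hPI0).le),
          abs_of_nonneg (div_nonneg s3
            (mul_pos (hQa0 true) (by linarith : (0:ℝ) < 1 - PI)).le),
          abs_of_nonpos (div_nonpos_of_nonpos_of_nonneg s4
            (mul_pos (hQa0 false) (by linarith : (0:ℝ) < 1 - PI)).le)]
      rw [abs_of_nonneg (by
          linarith [mul_nonneg (sub_nonneg.2 hqltp.le) (sub_nonneg.2 hc)] :
          (0:ℝ) ≤ p * m true + q * (1 - m true)
          - (p * m false + q * (1 - m false)))] at hK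
      rw [hK,
        show m true - MU = w false * (m true - m false) from by
          rw [hMU]; linear_combination (-(m true)) * hwsum,
        show m false - MU = -(w true * (m true - m false)) from by
          rw [hMU]; linear_combination (-(m false)) * hwsum,
        show p - PI = (p - q) * (1 - MU) from by rw [hPI]; ring]
      rw [cancel_aux _ _ _ _ (nPa true), cancel_aux _ _ _ _ (nQa true),
          cancel_aux' _ _ _ _ (nPa false), cancel_aux' _ _ _ _ (nQa false)]
      have hpq : p - q ≠ 0 := by linarith
      have h1MU : (1:ℝ) - MU ≠ 0 := by linarith
      field_simp
      rw [hPI, hMU, hw1]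
      ring
    · have hle1 : MU ≤ m false := by rw [hMU]; nlinarith [hwpos false, hwpos true]
      have hge0 : m true ≤ MU := by rw [hMU]; nlinarith [hwpos false, hwpos true]
      have s1 : p * q * (m true - MU) ≤ 0 := by
        have := mul_nonneg (mul_nonneg hp0.le hq0) (sub_nonneg.2 hge0)
        linarith [this]
      have s2 : (0:ℝ) ≤ p * q * (m false - MU) :=
        mul_nonneg (mul_nonneg hp0.le hq0) (by linarith)
      have s3 : (1 - p) * (1 - q) * (m true - MU) ≤ 0 := by
        have := mul_nonneg (mul_nonneg (by linarith : (0:ℝ) ≤ 1 - p)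
          (by linarith : (0:ℝ) ≤ 1 - q)) (sub_nonneg.2 hge0)
        linarith [this]
      have s4 : (0:ℝ) ≤ (1 - p) * (1 - q) * (m false - MU) :=
        mul_nonneg (mul_nonneg (by linarith) (by linarith)) (by linarith)
      rw [abs_of_nonpos (div_nonpos_of_nonpos_of_nonneg s1
            (mul_pos (hPa0 true) hPI0).le),
          abs_of_nonneg (div_nonneg s2 (mul_pos (hPa0 false) hPI0).le),
          abs_of_nonpos (div_nonpos_of_nonpos_of_nonneg s3
            (mul_pos (hQa0 true) (by linarith : (0:ℝ) < 1 - PI)).le),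
          abs_of_nonneg (div_nonneg s4
            (mul_pos (hQa0 false) (by linarith : (0:ℝ) < 1 - PI)).le)]
      rw [abs_of_nonpos (by
          linarith [mul_nonneg (sub_nonneg.2 hqltp.le) (sub_nonneg.2 hc)] :
          p * m true + q * (1 - m true)
          - (p * m false + q * (1 - m false)) ≤ 0)] at hK
      rw [hK,
        show m true - MU = w false * (m true - m false) from by
          rw [hMU]; linear_combination (-(m true)) * hwsum,
        show m false - MU = -(w true * (m true - m false)) from by
          rw [hMU]; linear_combination (-(m false)) * hwsum,
        show p - PI = (p - q) * (1 - MU) from by rw [hPI]; ring]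
      rw [cancel_aux' _ _ _ _ (nPa true), cancel_aux' _ _ _ _ (nQa true),
          cancel_aux _ _ _ _ (nPa false), cancel_aux _ _ _ _ (nQa false)]
      have hpq : p - q ≠ 0 := by linarith
      have h1MU : (1:ℝ) - MU ≠ 0 := by linarith
      field_simp
      rw [hPI, hMU, hw1]
      ring
  · intro x hx y hy hxy
    simp only [Set.mem_Ioi] at hx hy
    dsimp only
    have hK0 : 0 ≤ K := by
      rw [hK]
      exact mul_nonneg (mul_nonneg (by linarith [hwpos false] : (0:ℝ) ≤ 2 * w false)
        (hwpos true).le) (abs_nonneg _)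
    have hPIp : 0 < PI * (1 - PI) := mul_pos hPI0 (by linarith)
    have h1 : (1 - MU) / (y - PI) ≤ (1 - MU) / (x - PI) := by
      rw [div_le_div_iff₀ (by linarith) (by linarith)]
      nlinarith [mul_nonneg (by linarith : (0:ℝ) ≤ 1 - MU) (by linarith : (0:ℝ) ≤ y - x)]
    have h2 : MU * (x - PI) / (PI * (1 - PI)) ≤ MU * (y - PI) / (PI * (1 - PI)) := by
      rw [div_le_div_iff₀ hPIp hPIp]
      nlinarith [mul_nonneg (mul_nonneg hMU0.le (by linarith : (0:ℝ) ≤ y - x)) hPIp.le]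
    exact mul_le_mul_of_nonneg_left (by linarith) hK0
end
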